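/- Let μ₁, ν₁ be probability measures on a measurable space X and μ₂, ν₂ be probability measures on a measurable space Y. Suppose μ₁ and ν₁ are (ε₁, δ₁)-indistinguishable and μ₂ and ν₂ are (ε₂, δ₂)-indistinguishable, with δ₁, δ₂ ≥ 0. Then the product measures μ₁.prod μ₂ and ν₁.prod ν₂ on X × Y are (ε₁ + ε₂, δ₁ + δ₂)-indistinguishable. (Composition for approximate differential privacy: running two independent mechanisms that are (ε₁, δ₁)-DP and (ε₂, δ₂)-DP is (ε₁ + ε₂, δ₁ + δ₂)-DP.) -/

import Mathlib

open MeasureTheory Real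

/-- Measures `μ` and `ν` are `(ε, δ)`-indistinguishable if for every measurable set `S`,
`μ S ≤ exp ε * ν S + δ`. -/
def Indist {X : Type*} [MeasurableSpace X] (μ ν : Measure X) (ε δ : ℝ) : Prop :=
  ∀ S : Set X, MeasurableSet S →
    μ S ≤ ENNReal.ofReal (Real.exp ε) * ν S + ENNReal.ofReal δ

open Set in
/-- Indistinguishability extends from sets to `[0,1]`-valued functions, by the
layer-cake formula. -/
lemma lintegral_le_of_indist {X : Type*} [MeasurableSpace X] {μ ν : Measure X}
    {ε δ : ℝ} (h : Indist μ ν ε δ) {g : X → ENNReal} (hg : Measurable g)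
    (hg1 : ∀ x, g x ≤ 1) :
    ∫⁻ x, g x ∂μ ≤ ENNReal.ofReal (Real.exp ε) * ∫⁻ x, g x ∂ν + ENNReal.ofReal δ := by
  have hfin : ∀ x, g x ≠ ⊤ := fun x => ((hg1 x).trans_lt ENNReal.one_lt_top).ne
  set f : X → ℝ := fun x => (g x).toReal with hf
  have f_mble : Measurable f := hg.ennreal_toReal
  have f_nn : ∀ x, 0 ≤ f x := fun x => ENNReal.toReal_nonneg
  have hof : ∀ x, ENNReal.ofReal (f x) = g x := fun x => ENNReal.ofReal_toReal (hfin x)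
  have f_le1 : ∀ x, f x ≤ 1 := by
    intro x
    have := (ENNReal.toReal_le_toReal (hfin x) ENNReal.one_ne_top).mpr (hg1 x)
    simpa using this
  have hset : ∀ t : ℝ, MeasurableSet {a | t < f a} :=
    fun t => measurableSet_lt measurable_const f_mble
  have key : ∀ (κ : Measure X), ∫⁻ x, g x ∂κ = ∫⁻ t in Ioi (0:ℝ), κ {a | t < f a} := by
    intro κ
    rw [← lintegral_eq_lintegral_meas_lt κ (Filter.Eventually.of_forall f_nn)
      f_mble.aemeasurable]
    exact lintegral_congr fun x => (hof x).symm
  rw [key μ]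
  have hsplit : Ioi (0:ℝ) = Ioc (0:ℝ) 1 ∪ Ioi (1:ℝ) :=
    (Ioc_union_Ioi_eq_Ioi zero_le_one).symm
  rw [hsplit, lintegral_union measurableSet_Ioi (Ioc_disjoint_Ioi le_rfl)]
  have hzero : ∫⁻ t in Ioi (1:ℝ), μ {a | t < f a} = 0 := by
    rw [setLIntegral_congr_fun measurableSet_Ioi
      (fun ⦃t⦄ (ht : t ∈ Ioi (1:ℝ)) => ?_), lintegral_zero]
    have : {a | t < f a} = ∅ := by
      ext a
      simp only [Set.mem_setOf_eq, Set.mem_empty_iff_false, iff_false, not_lt]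
      exact (f_le1 a).trans (le_of_lt ht)
    simp [this]
  rw [hzero, add_zero]
  have step1 : ∫⁻ t in Ioc (0:ℝ) 1, μ {a | t < f a} ≤
      ∫⁻ t in Ioc (0:ℝ) 1, (ENNReal.ofReal (Real.exp ε) * ν {a | t < f a}
        + ENNReal.ofReal δ) :=
    lintegral_mono fun t => h _ (hset t)
  refine step1.trans ?_
  rw [lintegral_add_right _ measurable_const, lintegral_const,
    lintegral_const_mul' _ _ ENNReal.ofReal_ne_top]
  have hvol : (volume.restrict (Ioc (0:ℝ) 1)) Set.univ = 1 := by
    rw [Measure.restrict_apply_univ, Real.volume_Ioc]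
    norm_num
  rw [hvol, mul_one]
  gcongr
  calc ∫⁻ t in Ioc (0:ℝ) 1, ν {a | t < f a}
      ≤ ∫⁻ t in Ioi (0:ℝ), ν {a | t < f a} :=
        lintegral_mono_set Ioc_subset_Ioi_self
    _ = ∫⁻ x, g x ∂ν := (key ν).symm

/-- Composition for approximate differential privacy: running two independent mechanisms
that are `(ε₁, δ₁)`-DP and `(ε₂, δ₂)`-DP is `(ε₁ + ε₂, δ₁ + δ₂)`-DP. -/
theorem composition_prod {X Y : Type*} [MeasurableSpace X] [MeasurableSpace Y]
    (μ₁ ν₁ : Measure X) (μ₂ ν₂ : Measure Y)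
    [IsProbabilityMeasure μ₁] [IsProbabilityMeasure ν₁]
    [IsProbabilityMeasure μ₂] [IsProbabilityMeasure ν₂]
    (ε₁ ε₂ δ₁ δ₂ : ℝ) (hδ₁ : 0 ≤ δ₁) (hδ₂ : 0 ≤ δ₂)
    (h₁ : Indist μ₁ ν₁ ε₁ δ₁) (h₂ : Indist μ₂ ν₂ ε₂ δ₂) :
    Indist (μ₁.prod μ₂) (ν₁.prod ν₂) (ε₁ + ε₂) (δ₁ + δ₂) := by
  intro S hS
  set g : X → ENNReal := fun x =>
    min 1 (ENNReal.ofReal (Real.exp ε₂) * ν₂ (Prod.mk x ⁻¹' S)) with hg_def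
  have hg : Measurable g :=
    measurable_const.min (measurable_const.mul (measurable_measure_prodMk_left hS))
  have hg1 : ∀ x, g x ≤ 1 := fun x => min_le_left _ _
  -- pointwise slice bound
  have hslice : ∀ x, μ₂ (Prod.mk x ⁻¹' S) ≤ g x + ENNReal.ofReal δ₂ := by
    intro x
    rcases le_total (1 : ENNReal) (ENNReal.ofReal (Real.exp ε₂) * ν₂ (Prod.mk x ⁻¹' S))
      with hle | hle
    · have : g x = 1 := min_eq_left hle
      rw [this]
      exact le_add_right prob_le_one
    · have : g x = ENNReal.ofReal (Real.exp ε₂) * ν₂ (Prod.mk x ⁻¹' S) := min_eq_right hle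
      rw [this]
      exact h₂ _ (measurable_prodMk_left hS)
  calc (μ₁.prod μ₂) S = ∫⁻ x, μ₂ (Prod.mk x ⁻¹' S) ∂μ₁ := Measure.prod_apply hS
    _ ≤ ∫⁻ x, (g x + ENNReal.ofReal δ₂) ∂μ₁ := lintegral_mono hslice
    _ = ∫⁻ x, g x ∂μ₁ + ENNReal.ofReal δ₂ := by
        rw [lintegral_add_right _ measurable_const, lintegral_const, measure_univ, mul_one]
    _ ≤ (ENNReal.ofReal (Real.exp ε₁) * ∫⁻ x, g x ∂ν₁ + ENNReal.ofReal δ₁)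
        + ENNReal.ofReal δ₂ := by
        gcongr
        exact lintegral_le_of_indist h₁ hg hg1
    _ ≤ ENNReal.ofReal (Real.exp ε₁) *
          (ENNReal.ofReal (Real.exp ε₂) * (ν₁.prod ν₂) S)
        + ENNReal.ofReal δ₁ + ENNReal.ofReal δ₂ := by
        have hb : ∫⁻ x, g x ∂ν₁ ≤ ENNReal.ofReal (Real.exp ε₂) * (ν₁.prod ν₂) S := by
          rw [Measure.prod_apply hS, ← lintegral_const_mul' _ _ ENNReal.ofReal_ne_top]
          exact lintegral_mono fun x => min_le_right _ _
        exact add_le_add (add_le_add (mul_le_mul_right hb _) le_rfl) le_rfl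
    _ = ENNReal.ofReal (Real.exp (ε₁ + ε₂)) * (ν₁.prod ν₂) S
        + ENNReal.ofReal (δ₁ + δ₂) := by
        rw [Real.exp_add, ENNReal.ofReal_mul (Real.exp_nonneg _), mul_assoc,
          ENNReal.ofReal_add hδ₁ hδ₂, add_assoc]
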